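/- Let p be a prime and let n > 1 be a natural number. Then, in ℚ_p, the sequence N ↦ (1/p^N) · (∑_{x=0}^{p^N − 1} (1 − x)^n − ∑_{x=0}^{p^N − 1} x^n) tends (as N → ∞) to the natural number n (viewed in ℚ_p). (Equivalently, ∫_{ℤ_p} (1−x)^n dμ₁(x) = ∫_{ℤ_p} x^n dμ₁(x) + n.) -/

import Mathlib

open Filter Finset

private lemma padic_pow_tendsto_zero (p : ℕ) [Fact p.Prime] :
    Tendsto (fun N : ℕ => (p : ℚ_[p]) ^ N) atTop (nhds 0) :=
  tendsto_pow_atTop_nhds_zero_of_norm_lt_one Padic.norm_p_lt_one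

private lemma volkenborn_monomial (p : ℕ) [Fact p.Prime] (k : ℕ) :
    Tendsto (fun N : ℕ => (1 / (p : ℚ_[p]) ^ N) * ∑ x ∈ Finset.range (p ^ N), (x : ℚ_[p]) ^ k)
      atTop (nhds ((bernoulli k : ℚ) : ℚ_[p])) := by
  have hp0 : (p : ℚ_[p]) ≠ 0 := by
    exact_mod_cast Nat.cast_ne_zero.mpr (Fact.out (p := p.Prime)).ne_zero
  have hfun : (fun N : ℕ => (1 / (p : ℚ_[p]) ^ N) * ∑ x ∈ Finset.range (p ^ N), (x : ℚ_[p]) ^ k)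
      = fun N : ℕ => ∑ i ∈ range (k + 1),
        ((bernoulli i : ℚ) : ℚ_[p]) * ((k + 1).choose i) / (k + 1) * ((p : ℚ_[p]) ^ N) ^ (k - i) := by
    funext N
    have h := sum_range_pow (p ^ N) k
    have h2 := congrArg (fun q : ℚ => (q : ℚ_[p])) h
    push_cast at h2
    rw [h2, Finset.mul_sum]
    refine Finset.sum_congr rfl fun i hi => ?_
    have hik : i ≤ k := Nat.lt_succ_iff.mp (Finset.mem_range.mp hi)
    have hexp : k + 1 - i = (k - i) + 1 := by omega
    rw [hexp, pow_succ]
    have hpN : ((p : ℚ_[p]) ^ N) ≠ 0 := pow_ne_zero _ hp0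
    have hK : ((k : ℚ_[p]) + 1) ≠ 0 := by
      have : ((k + 1 : ℕ) : ℚ_[p]) ≠ 0 := by
        simp only [Ne, Nat.cast_eq_zero]; omega
      push_cast at this; exact this
    field_simp
  rw [hfun]
  have hlim : Tendsto
      (fun N : ℕ => ∑ i ∈ range (k + 1),
        ((bernoulli i : ℚ) : ℚ_[p]) * ((k + 1).choose i) / (k + 1) * ((p : ℚ_[p]) ^ N) ^ (k - i))
      atTop (nhds (∑ i ∈ range (k + 1),
        ((bernoulli i : ℚ) : ℚ_[p]) * ((k + 1).choose i) / (k + 1) * (0 : ℚ_[p]) ^ (k - i))) := by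
    refine tendsto_finset_sum _ fun i _ => ?_
    exact (tendsto_const_nhds.mul ((padic_pow_tendsto_zero p).pow _))
  convert hlim using 2
  rw [Finset.sum_eq_single k]
  · have hk1 : ((k : ℚ_[p]) + 1) ≠ 0 := by
      have : ((k + 1 : ℕ) : ℚ_[p]) ≠ 0 := by
        simp only [Ne, Nat.cast_eq_zero]
        omega
      push_cast at this
      exact this
    rw [Nat.choose_succ_self_right, Nat.sub_self, pow_zero, mul_one]
    rw [mul_div_assoc]
    have : ((k + 1 : ℕ) : ℚ_[p]) / ((k : ℚ_[p]) + 1) = 1 := by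
      rw [div_eq_one_iff_eq hk1]; push_cast; ring
    rw [this, mul_one]
  · intro i hi hik
    have : k - i ≠ 0 := by
      have := Finset.mem_range.mp hi; omega
    simp [zero_pow this]
  · intro h; exact absurd (Finset.self_mem_range_succ k) h

private lemma bernoulli_identity (n : ℕ) (hn : 1 < n) :
    (∑ k ∈ range (n + 1), (-1 : ℚ) ^ k * (n.choose k) * bernoulli k) - bernoulli n = n := by
  have h1 : ∀ k, (-1 : ℚ) ^ k * bernoulli k = bernoulli' k := by
    intro k
    rw [bernoulli'_eq_bernoulli]
  have h2 : (∑ k ∈ range (n + 1), (-1 : ℚ) ^ k * (n.choose k) * bernoulli k)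
      = ∑ k ∈ range (n + 1), (n.choose k : ℚ) * bernoulli' k := by
    refine Finset.sum_congr rfl fun k _ => ?_
    rw [← h1 k]; ring
  rw [h2, Finset.sum_range_succ, sum_bernoulli' n, Nat.choose_self]
  have h3 : bernoulli' n = bernoulli n := (bernoulli_eq_bernoulli'_of_ne_one (by omega)).symm
  rw [h3]; ring

/-- For `n > 1`, `∫_{ℤ_p} (1−x)^n dμ₁(x) = ∫_{ℤ_p} x^n dμ₁(x) + n`, stated as the convergence
of the difference of the Volkenborn sums to `n`. -/
theorem volkenborn_one_sub_pow_sub_pow (p : ℕ) [Fact p.Prime] (n : ℕ) (hn : 1 < n) :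
    Filter.Tendsto
      (fun N : ℕ => (1 / (p : ℚ_[p]) ^ N) *
        ((∑ x ∈ Finset.range (p ^ N), (1 - (x : ℚ_[p])) ^ n)
          - ∑ x ∈ Finset.range (p ^ N), (x : ℚ_[p]) ^ n))
      Filter.atTop
      (nhds (n : ℚ_[p])) := by
  have hfun : (fun N : ℕ => (1 / (p : ℚ_[p]) ^ N) *
        ((∑ x ∈ Finset.range (p ^ N), (1 - (x : ℚ_[p])) ^ n)
          - ∑ x ∈ Finset.range (p ^ N), (x : ℚ_[p]) ^ n))
      = fun N : ℕ =>
        (∑ k ∈ range (n + 1), ((-1 : ℚ_[p]) ^ k * (n.choose k)) *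
          ((1 / (p : ℚ_[p]) ^ N) * ∑ x ∈ Finset.range (p ^ N), (x : ℚ_[p]) ^ k))
        - (1 / (p : ℚ_[p]) ^ N) * ∑ x ∈ Finset.range (p ^ N), (x : ℚ_[p]) ^ n := by
    funext N
    have hexp : ∀ x : ℚ_[p], (1 - x) ^ n
        = ∑ k ∈ range (n + 1), (-1 : ℚ_[p]) ^ k * x ^ k * (n.choose k) := by
      intro x
      rw [sub_eq_add_neg, add_comm, add_pow]
      refine Finset.sum_congr rfl fun k _ => ?_
      rw [neg_pow]
      ring
    simp_rw [hexp]
    rw [Finset.sum_comm]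
    simp_rw [← Finset.sum_mul, ← Finset.mul_sum]
    rw [mul_sub, Finset.mul_sum]
    congr 1
    refine Finset.sum_congr rfl fun k _ => ?_
    ring
  rw [hfun]
  have hlim := fun k => volkenborn_monomial p k
  have hsum : Tendsto
      (fun N : ℕ => ∑ k ∈ range (n + 1), ((-1 : ℚ_[p]) ^ k * (n.choose k)) *
          ((1 / (p : ℚ_[p]) ^ N) * ∑ x ∈ Finset.range (p ^ N), (x : ℚ_[p]) ^ k))
      atTop (nhds (∑ k ∈ range (n + 1),
        ((-1 : ℚ_[p]) ^ k * (n.choose k)) * ((bernoulli k : ℚ) : ℚ_[p]))) :=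
    tendsto_finset_sum _ fun k _ => tendsto_const_nhds.mul (hlim k)
  have htotal := hsum.sub (hlim n)
  convert htotal using 2
  have := bernoulli_identity n hn
  have h2 := congrArg (fun q : ℚ => (q : ℚ_[p])) this
  push_cast at h2
  rw [← h2]
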